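/- Every finite-dimensional irreducible representation of sl₂(ℂ) of dimension m+1 is isomorphic to V(m), the representation on ⊕_{i=0}^m ℂv_i with h·v_i = (m−2i)v_i, f·v_i = (i+1)v_{i+1}, e·v_i = (m−i+1)v_{i−1}. -/

import Mathlib

/-- The action of `e` on `V(m)`: `e·v_i = (m−i+1)v_{i−1}`. -/
def Eop (m : ℕ) (v : Fin (m + 1) → ℂ) : Fin (m + 1) → ℂ :=
  fun j => if h : (j : ℕ) + 1 < m + 1 then ((m : ℂ) - (j : ℕ)) * v ⟨(j : ℕ) + 1, h⟩ else 0

/-- The action of `f` on `V(m)`: `f·v_i = (i+1)v_{i+1}`. -/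
def Fop (m : ℕ) (v : Fin (m + 1) → ℂ) : Fin (m + 1) → ℂ :=
  fun j => ((j : ℕ) : ℂ) *
    v ⟨(j : ℕ) - 1, Nat.lt_of_le_of_lt (Nat.sub_le _ _) j.isLt⟩

/-- The action of `h` on `V(m)`: `h·v_i = (m−2i)v_i`. -/
def Hop (m : ℕ) (v : Fin (m + 1) → ℂ) : Fin (m + 1) → ℂ :=
  fun j => ((m : ℂ) - 2 * (j : ℕ)) * v j

/-- `Eop` as a linear map. -/
def EopL (m : ℕ) : (Fin (m + 1) → ℂ) →ₗ[ℂ] (Fin (m + 1) → ℂ) where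
  toFun := Eop m
  map_add' x y := by
    funext j
    simp only [Eop, Pi.add_apply]
    split <;> ring
  map_smul' c x := by
    funext j
    simp only [Eop, Pi.smul_apply, smul_eq_mul, RingHom.id_apply]
    split <;> ring

@[simp] theorem EopL_apply (m : ℕ) (v : Fin (m + 1) → ℂ) : EopL m v = Eop m v := rfl

/-- `Fop` as a linear map. -/
def FopL (m : ℕ) : (Fin (m + 1) → ℂ) →ₗ[ℂ] (Fin (m + 1) → ℂ) where
  toFun := Fop m
  map_add' x y := by funext j; simp only [Fop, Pi.add_apply]; ring
  map_smul' c x := by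
    funext j; simp only [Fop, Pi.smul_apply, smul_eq_mul, RingHom.id_apply]; ring

@[simp] theorem FopL_apply (m : ℕ) (v : Fin (m + 1) → ℂ) : FopL m v = Fop m v := rfl

/-- `Hop` as a linear map. -/
def HopL (m : ℕ) : (Fin (m + 1) → ℂ) →ₗ[ℂ] (Fin (m + 1) → ℂ) where
  toFun := Hop m
  map_add' x y := by funext j; simp only [Hop, Pi.add_apply]; ring
  map_smul' c x := by
    funext j; simp only [Hop, Pi.smul_apply, smul_eq_mul, RingHom.id_apply]; ring

@[simp] theorem HopL_apply (m : ℕ) (v : Fin (m + 1) → ℂ) : HopL m v = Hop m v := rfl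

/-- Every `(m+1)`-dimensional irreducible representation of `sl₂(ℂ)` is
isomorphic to `V(m)` via an `sl₂(ℂ)`-equivariant linear isomorphism. -/
theorem stmt16 {V : Type*} [AddCommGroup V] [Module ℂ V] (m : ℕ)
    (hdim : Module.finrank ℂ V = m + 1)
    (E F H : V →ₗ[ℂ] V)
    (hHE : ∀ v, H (E v) - E (H v) = (2 : ℂ) • E v)
    (hHF : ∀ v, H (F v) - F (H v) = (-2 : ℂ) • F v)
    (hEF : ∀ v, E (F v) - F (E v) = H v)
    (hirr : ∀ W : Submodule ℂ V,
      (∀ v ∈ W, E v ∈ W ∧ F v ∈ W ∧ H v ∈ W) → W = ⊥ ∨ W = ⊤) :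
    ∃ φ : V ≃ₗ[ℂ] (Fin (m + 1) → ℂ),
      (∀ v, φ (E v) = Eop m (φ v)) ∧
      (∀ v, φ (F v) = Fop m (φ v)) ∧
      (∀ v, φ (H v) = Hop m (φ v)) := by
  classical
  have hfd : FiniteDimensional ℂ V := FiniteDimensional.of_finrank_pos (by omega)
  have hnt : Nontrivial V := Module.nontrivial_of_finrank_pos (R := ℂ) (by omega)
  have hHE' : ∀ v, H (E v) = (2 : ℂ) • E v + E (H v) := fun v => sub_eq_iff_eq_add.mp (hHE v)
  have hHF' : ∀ v, H (F v) = (-2 : ℂ) • F v + F (H v) := fun v => sub_eq_iff_eq_add.mp (hHF v)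
  have hEF' : ∀ v, E (F v) = H v + F (E v) := fun v => sub_eq_iff_eq_add.mp (hEF v)
  obtain ⟨μ₀, hμ₀⟩ := Module.End.exists_eigenvalue (K := ℂ) (V := V) H
  obtain ⟨w, hw⟩ := hμ₀.exists_hasEigenvector
  have hw0 : w ≠ 0 := hw.right
  have hHw : H w = μ₀ • w := hw.apply_eq_smul
  have heig : ∀ k : ℕ, H ((E ^ k) w) = (μ₀ + 2 * k) • (E ^ k) w := by
    intro k
    induction k with
    | zero => simpa using hHw
    | succ k ih =>
      have h1 : (E ^ (k + 1)) w = E ((E ^ k) w) := by rw [pow_succ']; rfl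
      rw [h1, hHE' _, ih, map_smul]
      push_cast
      module
  have hEstop : ∃ k : ℕ, (E ^ k) w = 0 := by
    by_contra hc
    push_neg at hc
    have hli : LinearIndependent ℂ (fun i : Fin (m + 2) => (E ^ (i : ℕ)) w) := by
      apply Module.End.eigenvectors_linearIndependent' (f := H)
        (μ := fun i : Fin (m + 2) => μ₀ + 2 * ((i : ℕ) : ℂ))
      · intro i j hij
        have h2 : ((i : ℕ) : ℂ) = ((j : ℕ) : ℂ) := by
          have h3 : 2 * ((i : ℕ) : ℂ) = 2 * ((j : ℕ) : ℂ) := by linear_combination hij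
          exact mul_left_cancel₀ two_ne_zero h3
        exact Fin.ext (by exact_mod_cast h2)
      · intro i
        exact ⟨Module.End.mem_eigenspace_iff.mpr (heig i), hc i⟩
    have hcard := hli.fintype_card_le_finrank
    simp [hdim] at hcard
  obtain ⟨n₀, hn₀, hEn₀⟩ : ∃ k : ℕ, (E ^ k) w ≠ 0 ∧ E ((E ^ k) w) = 0 := by
    have h0 : ¬ (E ^ 0) w = 0 := by simpa using hw0
    have hN : Nat.find hEstop ≠ 0 := fun h => h0 (h ▸ Nat.find_spec hEstop)
    refine ⟨Nat.find hEstop - 1, Nat.find_min hEstop (by omega), ?_⟩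
    have h1 : (E ^ (Nat.find hEstop - 1 + 1)) w = E ((E ^ (Nat.find hEstop - 1)) w) := by
      rw [pow_succ']; rfl
    rw [← h1]
    have h2 : Nat.find hEstop - 1 + 1 = Nat.find hEstop := by omega
    rw [h2]; exact Nat.find_spec hEstop
  set lam : ℂ := μ₀ + 2 * (n₀ : ℂ) with hlamdef
  obtain ⟨v₀, hv₀, hEv₀, hHv₀⟩ : ∃ v₀ : V, v₀ ≠ 0 ∧ E v₀ = 0 ∧ H v₀ = lam • v₀ :=
    ⟨(E ^ n₀) w, hn₀, hEn₀, heig n₀⟩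
  -- the chain of vectors
  obtain ⟨u, hu0, hFu⟩ : ∃ u : ℕ → V, u 0 = v₀ ∧
      ∀ i : ℕ, F (u i) = ((i : ℂ) + 1) • u (i + 1) := by
    refine ⟨fun i => ((i.factorial : ℂ))⁻¹ • (F ^ i) v₀, by simp, fun i => ?_⟩
    have h1 : (F ^ (i + 1)) v₀ = F ((F ^ i) v₀) := by rw [pow_succ']; rfl
    simp only [map_smul, h1, smul_smul]
    congr 1
    have hfac : (((i + 1).factorial : ℕ) : ℂ) = ((i : ℂ) + 1) * ((i.factorial : ℕ) : ℂ) := by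
      rw [Nat.factorial_succ]; push_cast; ring
    have h2 : ((i.factorial : ℕ) : ℂ) ≠ 0 := by exact_mod_cast Nat.factorial_ne_zero i
    have h3 : ((i : ℂ) + 1) ≠ 0 := Nat.cast_add_one_ne_zero i
    rw [hfac]
    field_simp
  have husucc : ∀ i : ℕ, u (i + 1) = ((i : ℂ) + 1)⁻¹ • F (u i) := by
    intro i
    rw [hFu i, smul_smul, inv_mul_cancel₀ (Nat.cast_add_one_ne_zero i), one_smul]
  have hHu : ∀ i : ℕ, H (u i) = (lam - 2 * i) • u i := by
    intro i
    induction i with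
    | zero => rw [hu0]; push_cast; simpa using hHv₀
    | succ i ih =>
      rw [husucc i, map_smul, hHF' _, ih, map_smul, hFu i]
      push_cast
      match_scalars
      field_simp
      ring
  have hEu : ∀ i : ℕ, E (u (i + 1)) = (lam - i) • u i := by
    intro i
    induction i with
    | zero =>
      rw [husucc 0, map_smul, hEF' _, hu0, hEv₀, map_zero, hHv₀]
      push_cast
      match_scalars
      field_simp
      ring
    | succ i ih =>
      have hne : (2 + (i : ℂ)) ≠ 0 := by
        have h4 : ((i + 2 : ℕ) : ℂ) ≠ 0 := Nat.cast_ne_zero.mpr (by omega)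
        push_cast at h4
        intro h; exact h4 (by linear_combination h)
      rw [husucc (i + 1), map_smul, hEF' _, ih, map_smul, hFu i, hHu (i + 1)]
      push_cast
      match_scalars
      linear_combination (-1 + lam - (i : ℂ)) * mul_inv_cancel₀ hne
  have hEu0 : E (u 0) = 0 := by rw [hu0]; exact hEv₀
  -- the chain terminates
  have hustop : ∃ k : ℕ, u k = 0 := by
    by_contra hc
    push_neg at hc
    have hli : LinearIndependent ℂ (fun i : Fin (m + 2) => u (i : ℕ)) := by
      apply Module.End.eigenvectors_linearIndependent' (f := H)
        (μ := fun i : Fin (m + 2) => lam - 2 * ((i : ℕ) : ℂ))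
      · intro i j hij
        have h2 : ((i : ℕ) : ℂ) = ((j : ℕ) : ℂ) := by
          have h3 : 2 * ((i : ℕ) : ℂ) = 2 * ((j : ℕ) : ℂ) := by linear_combination -hij
          exact mul_left_cancel₀ two_ne_zero h3
        exact Fin.ext (by exact_mod_cast h2)
      · intro i
        exact ⟨Module.End.mem_eigenspace_iff.mpr (hHu i), hc i⟩
    have hcard := hli.fintype_card_le_finrank
    simp [hdim] at hcard
  obtain ⟨n, hun, hun1⟩ : ∃ n : ℕ, u n ≠ 0 ∧ u (n + 1) = 0 := by
    have h0 : ¬ u 0 = 0 := by rw [hu0]; exact hv₀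
    have hN : Nat.find hustop ≠ 0 := fun h => h0 (h ▸ Nat.find_spec hustop)
    refine ⟨Nat.find hustop - 1, Nat.find_min hustop (by omega), ?_⟩
    have h2 : Nat.find hustop - 1 + 1 = Nat.find hustop := by omega
    rw [h2]; exact Nat.find_spec hustop
  -- the highest weight is n
  have hlam : lam = (n : ℂ) := by
    have h0 := hEu n
    rw [hun1, map_zero] at h0
    have h1 := (smul_eq_zero.mp h0.symm).resolve_right hun
    exact sub_eq_zero.mp h1
  -- vanishing above n
  have hvan : ∀ i : ℕ, n < i → u i = 0 := by
    have hz : ∀ k : ℕ, u (n + 1 + k) = 0 := by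
      intro k
      induction k with
      | zero => exact hun1
      | succ k ih =>
        have : n + 1 + (k + 1) = (n + 1 + k) + 1 := by omega
        rw [this, husucc, ih, map_zero, smul_zero]
    intro i hi
    have := hz (i - (n + 1))
    rwa [show n + 1 + (i - (n + 1)) = i by omega] at this
  -- nonvanishing up to n
  have hnz : ∀ i : ℕ, i ≤ n → u i ≠ 0 := by
    intro i hi h0
    apply hun
    have hz : ∀ k : ℕ, u (i + k) = 0 := by
      intro k
      induction k with
      | zero => exact h0
      | succ k ih =>
        have : i + (k + 1) = (i + k) + 1 := by omega
        rw [this, husucc, ih, map_zero, smul_zero]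
    have := hz (n - i)
    rwa [show i + (n - i) = n by omega] at this
  -- linear independence
  have hli : LinearIndependent ℂ (fun i : Fin (n + 1) => u (i : ℕ)) := by
    apply Module.End.eigenvectors_linearIndependent' (f := H)
      (μ := fun i : Fin (n + 1) => lam - 2 * ((i : ℕ) : ℂ))
    · intro i j hij
      have h2 : ((i : ℕ) : ℂ) = ((j : ℕ) : ℂ) := by
        have h3 : 2 * ((i : ℕ) : ℂ) = 2 * ((j : ℕ) : ℂ) := by linear_combination -hij
        exact mul_left_cancel₀ two_ne_zero h3
      exact Fin.ext (by exact_mod_cast h2)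
    · intro i
      exact ⟨Module.End.mem_eigenspace_iff.mpr (hHu i), hnz i (by omega)⟩
  -- spanning via irreducibility
  set W : Submodule ℂ V := Submodule.span ℂ (Set.range fun i : Fin (n + 1) => u (i : ℕ))
    with hWdef
  have hmem : ∀ i : ℕ, u i ∈ W := by
    intro i
    by_cases hin : i ≤ n
    · exact Submodule.subset_span ⟨⟨i, by omega⟩, rfl⟩
    · rw [hvan i (by omega)]; exact W.zero_mem
  have hWmap : ∀ T : V →ₗ[ℂ] V, (∀ i : ℕ, T (u i) ∈ W) → ∀ v ∈ W, T v ∈ W := by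
    intro T hT v hv
    have hle : W.map T ≤ W := by
      rw [hWdef, Submodule.map_span, Submodule.span_le]
      rintro x ⟨y, ⟨i, rfl⟩, rfl⟩
      exact hT i
    exact hle ⟨v, hv, rfl⟩
  have hWcl : ∀ v ∈ W, E v ∈ W ∧ F v ∈ W ∧ H v ∈ W := by
    intro v hv
    refine ⟨hWmap E ?_ v hv, hWmap F ?_ v hv, hWmap H ?_ v hv⟩
    · intro i
      cases i with
      | zero => rw [hEu0]; exact W.zero_mem
      | succ k => rw [hEu k]; exact W.smul_mem _ (hmem k)
    · intro i
      rw [hFu i]; exact W.smul_mem _ (hmem (i + 1))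
    · intro i
      rw [hHu i]; exact W.smul_mem _ (hmem i)
  have hWtop : W = ⊤ := by
    rcases hirr W hWcl with hbot | htop
    · exact absurd (hbot ▸ hmem 0) (by simpa [hu0] using hv₀)
    · exact htop
  -- dimension count: n = m
  have hle1 : m + 1 ≤ n + 1 := by
    have := finrank_le_of_span_eq_top (R := ℂ) (v := fun i : Fin (n + 1) => u (i : ℕ))
      (by rw [← hWdef]; exact hWtop)
    simpa [hdim] using this
  have hle2 : n + 1 ≤ m + 1 := by
    have := hli.fintype_card_le_finrank
    simpa [hdim] using this
  have hnm : n = m := by omega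
  subst hnm
  -- the basis
  set b : Module.Basis (Fin (n + 1)) ℂ V :=
    basisOfLinearIndependentOfCardEqFinrank hli (by simp [hdim]) with hbdef
  have hb : ∀ i : Fin (n + 1), b i = u (i : ℕ) := by
    intro i
    rw [hbdef, coe_basisOfLinearIndependentOfCardEqFinrank]
  have hφu : ∀ (iv : ℕ) (hiv : iv < n + 1) (j : Fin (n + 1)),
      b.equivFun (u iv) j = if (j : ℕ) = iv then (1 : ℂ) else 0 := by
    intro iv hiv j
    rw [← hb ⟨iv, hiv⟩, Module.Basis.equivFun_self]
    simp [Fin.ext_iff, eq_comm]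
  have keyE : ∀ (iv : ℕ) (hiv : iv < n + 1),
      b.equivFun (E (u iv)) = Eop n (b.equivFun (u iv)) := by
    intro iv hiv
    cases iv with
    | zero =>
      rw [hEu0, map_zero]
      funext j
      simp only [Eop, Pi.zero_apply]
      split
      · rw [hφu 0 hiv]
        simp
      · rfl
    | succ k =>
      have hk : k < n + 1 := by omega
      rw [hEu k, map_smul]
      funext j
      simp only [Eop, Pi.smul_apply, smul_eq_mul]
      by_cases h : (j : ℕ) + 1 < n + 1
      · rw [dif_pos h, hφu k hk j, hφu (k + 1) hiv ⟨(j : ℕ) + 1, h⟩]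
        by_cases hj : (j : ℕ) = k
        · rw [if_pos hj, if_pos (by simp [hj]), hlam]
          have hjc : ((j : ℕ) : ℂ) = (k : ℂ) := by exact_mod_cast hj
          rw [hjc]
        · rw [if_neg hj, if_neg (by simpa using hj), mul_zero, mul_zero]
      · rw [dif_neg h, hφu k hk j,
          if_neg (by have := j.isLt; omega), mul_zero]
  have keyF : ∀ (iv : ℕ) (hiv : iv < n + 1),
      b.equivFun (F (u iv)) = Fop n (b.equivFun (u iv)) := by
    intro iv hiv
    rw [hFu iv]
    by_cases hivn : iv = n
    · rw [hivn, hun1, smul_zero, map_zero]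
      funext j
      simp only [Fop, Pi.zero_apply]
      rw [hφu n (by omega)]
      by_cases hj : (j : ℕ) - 1 = n
      · have hj0 : (j : ℕ) = 0 := by have := j.isLt; omega
        simp [hj, hj0]
      · rw [if_neg (by simpa using hj), mul_zero]
    · have h1 : iv + 1 < n + 1 := by omega
      rw [map_smul]
      funext j
      simp only [Fop, Pi.smul_apply, smul_eq_mul]
      rw [hφu (iv + 1) h1 j, hφu iv hiv ⟨(j : ℕ) - 1, _⟩]
      by_cases hj : (j : ℕ) = iv + 1
      · rw [if_pos hj, if_pos (by simp; omega)]
        have hjc : ((j : ℕ) : ℂ) = ((iv : ℕ) : ℂ) + 1 := by exact_mod_cast hj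
        rw [hjc]
      · by_cases hj0 : (j : ℕ) = 0
        · rw [if_neg hj]
          have : ((j : ℕ) : ℂ) = 0 := by exact_mod_cast hj0
          rw [this, mul_zero, zero_mul]
        · rw [if_neg hj, if_neg (by simp; omega), mul_zero, mul_zero]
  have keyH : ∀ (iv : ℕ) (hiv : iv < n + 1),
      b.equivFun (H (u iv)) = Hop n (b.equivFun (u iv)) := by
    intro iv hiv
    rw [hHu iv, map_smul]
    funext j
    simp only [Hop, Pi.smul_apply, smul_eq_mul]
    rw [hφu iv hiv j]
    by_cases hj : (j : ℕ) = iv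
    · rw [if_pos hj, hlam]
      have hjc : ((j : ℕ) : ℂ) = ((iv : ℕ) : ℂ) := by exact_mod_cast hj
      rw [hjc]
    · rw [if_neg hj, mul_zero, mul_zero]
  refine ⟨b.equivFun, ?_, ?_, ?_⟩
  · have hext : b.equivFun.toLinearMap ∘ₗ E = (EopL n) ∘ₗ b.equivFun.toLinearMap := by
      apply Module.Basis.ext b
      intro i
      simp only [LinearMap.coe_comp, Function.comp_apply, LinearEquiv.coe_coe, EopL_apply]
      rw [hb i]
      exact keyE (i : ℕ) i.isLt
    intro v
    simpa using LinearMap.congr_fun hext v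
  · have hext : b.equivFun.toLinearMap ∘ₗ F = (FopL n) ∘ₗ b.equivFun.toLinearMap := by
      apply Module.Basis.ext b
      intro i
      simp only [LinearMap.coe_comp, Function.comp_apply, LinearEquiv.coe_coe, FopL_apply]
      rw [hb i]
      exact keyF (i : ℕ) i.isLt
    intro v
    simpa using LinearMap.congr_fun hext v
  · have hext : b.equivFun.toLinearMap ∘ₗ H = (HopL n) ∘ₗ b.equivFun.toLinearMap := by
      apply Module.Basis.ext b
      intro i
      simp only [LinearMap.coe_comp, Function.comp_apply, LinearEquiv.coe_coe, HopL_apply]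
      rw [hb i]
      exact keyH (i : ℕ) i.isLt
    intro v
    simpa using LinearMap.congr_fun hext v
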